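/- arXiv:1308.1450 — 2 statements merged into one kernel-verified Lean document; each statement's English description precedes it below -/
import Mathlib

section
/- Suppose β : [0,t₀) → ℝ is C¹ and satisfies dβ/dt = -a(t)/(2β(t)) - b(t) with β(t) < 0 on [0,t₀), where a, b : [0,t₀] → ℝ are continuous, a(t₀) = a₄ > 0, b bounded, and β(t) → 0 as t ↗ t₀. Then β(t)² = a₄(t₀-t) + o(t₀-t) as t ↗ t₀; in particular |β(t)| ~ √(a₄(t₀-t)). -/
open Real Filter Asymptotics

/-- Near the blow-up time, the solution of `β' = -a/(2β) - b` with `β < 0`, `β → 0⁻`,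
`a → a₄ > 0` and `b` bounded satisfies `β² = a₄(t₀-t) + o(t₀-t)`, hence
`|β(t)| ~ √(a₄(t₀-t))`. -/
theorem stmt3 (t₀ a₄ : ℝ) (ht₀ : 0 < t₀) (β a b : ℝ → ℝ)
    (hβreg : ContDiffOn ℝ 1 β (Set.Ico 0 t₀))
    (hode : ∀ t ∈ Set.Ico (0:ℝ) t₀, deriv β t = -(a t) / (2 * β t) - b t)
    (hβneg : ∀ t ∈ Set.Ico (0:ℝ) t₀, β t < 0)
    (ha : ContinuousOn a (Set.Icc 0 t₀))
    (hb : ContinuousOn b (Set.Icc 0 t₀))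
    (ha₄ : a t₀ = a₄) (ha₄pos : 0 < a₄)
    (hbbdd : ∃ M, ∀ t ∈ Set.Icc (0:ℝ) t₀, |b t| ≤ M)
    (hβ0 : Tendsto β (nhdsWithin t₀ (Set.Iio t₀)) (nhds 0)) :
    (fun t => β t ^ 2 - a₄ * (t₀ - t)) =o[nhdsWithin t₀ (Set.Iio t₀)] (fun t => t₀ - t) ∧
    Tendsto (fun t => |β t| / Real.sqrt (a₄ * (t₀ - t)))
      (nhdsWithin t₀ (Set.Iio t₀)) (nhds 1) := by
  obtain ⟨M, hM⟩ := hbbdd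
  set L := nhdsWithin t₀ (Set.Iio t₀) with hLdef
  have hLeq : L = nhdsWithin t₀ (Set.Ioo 0 t₀) :=
    (nhdsWithin_Ioo_eq_nhdsLT ht₀).symm
  set F : ℝ → ℝ := fun t => β t ^ 2 + a₄ * t with hFdef
  set D : ℝ → ℝ := fun t => a₄ - a t - 2 * β t * b t with hDdef
  -- derivative of F
  have hF : ∀ t ∈ Set.Ioo (0:ℝ) t₀, HasDerivAt F (D t) t := by
    intro t ht
    have htIco : t ∈ Set.Ico (0:ℝ) t₀ := ⟨le_of_lt ht.1, ht.2⟩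
    have hdiff : DifferentiableAt ℝ β t :=
      (hβreg.contDiffAt (Ico_mem_nhds ht.1 ht.2)).differentiableAt one_ne_zero
    have h1 : HasDerivAt β (deriv β t) t := hdiff.hasDerivAt
    have h2 : HasDerivAt (fun t => β t ^ 2) (2 * β t ^ 1 * deriv β t) t := by
      simpa using h1.fun_pow 2
    have h3 : HasDerivAt F (2 * β t ^ 1 * deriv β t + a₄) t := by
      simpa using h2.fun_add ((hasDerivAt_id t).const_mul a₄)
    have hβne : β t ≠ 0 := ne_of_lt (hβneg t htIco)
    have : 2 * β t ^ 1 * deriv β t + a₄ = D t := by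
      rw [hode t htIco]
      field_simp [hDdef]
      ring
    rwa [this] at h3
  -- F tends to a₄ * t₀
  have hFlim : Tendsto F L (nhds (a₄ * t₀)) := by
    have h1 : Tendsto (fun t => β t ^ 2) L (nhds 0) := by
      simpa using hβ0.pow 2
    have h2 : Tendsto (fun t : ℝ => a₄ * t) L (nhds (a₄ * t₀)) :=
      ((continuous_const.mul continuous_id).tendsto t₀).mono_left nhdsWithin_le_nhds
    simpa using h1.add h2
  -- D tends to 0
  have hmemIoo : ∀ᶠ t in L, t ∈ Set.Ioo (0:ℝ) t₀ := by
    rw [hLeq]; exact self_mem_nhdsWithin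
  have halim : Tendsto a L (nhds a₄) := by
    have h1 : Tendsto a (nhdsWithin t₀ (Set.Icc 0 t₀)) (nhds a₄) := by
      have := ha.continuousWithinAt (Set.right_mem_Icc.2 (le_of_lt ht₀))
      rwa [ContinuousWithinAt, ha₄] at this
    refine h1.mono_left ?_
    rw [hLeq]
    exact nhdsWithin_mono _ Set.Ioo_subset_Icc_self
  have hblim : Tendsto (fun t => 2 * β t * b t) L (nhds 0) := by
    apply squeeze_zero_norm' (a := fun t => 2 * |M| * |β t|)
    · filter_upwards [hmemIoo] with t ht
      have hbt : |b t| ≤ |M| :=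
        le_trans (hM t ⟨le_of_lt ht.1, le_of_lt ht.2⟩) (le_abs_self M)
      have : ‖2 * β t * b t‖ = 2 * |β t| * |b t| := by
        simp [abs_mul]
      rw [this]
      calc 2 * |β t| * |b t| ≤ 2 * |β t| * |M| := by
            apply mul_le_mul_of_nonneg_left hbt; positivity
        _ = 2 * |M| * |β t| := by ring
    · have : Tendsto (fun t => |β t|) L (nhds 0) := by
        simpa using hβ0.abs
      simpa using this.const_mul (2 * |M|)
  have hDlim : Tendsto D L (nhds 0) := by
    have := (tendsto_const_nhds (x := a₄) (f := L)).sub halim |>.sub hblim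
    simpa using this
  -- key little-o estimate
  have key : (fun t => β t ^ 2 - a₄ * (t₀ - t)) =o[L] (fun t => t₀ - t) := by
    rw [isLittleO_iff]
    intro ε hε
    have hD : ∀ᶠ s in L, |D s| ≤ ε := by
      have := hDlim.eventually (Metric.ball_mem_nhds (0:ℝ) hε)
      filter_upwards [this] with s hs
      rw [Real.dist_eq, sub_zero] at hs
      exact le_of_lt hs
    obtain ⟨c, hc, hsub⟩ := mem_nhdsLT_iff_exists_Ioo_subset.1 hD
    set c₁ := max c 0 with hc₁
    have hc₁lt : c₁ < t₀ := max_lt hc ht₀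
    have hbound : ∀ t ∈ Set.Ioo c₁ t₀, |F t - a₄ * t₀| ≤ ε * (t₀ - t) := by
      intro t ht
      have htpos : 0 < t := lt_of_le_of_lt (le_max_right c 0) ht.1
      have htc : c < t := lt_of_le_of_lt (le_max_left c 0) ht.1
      -- for s ∈ (t, t₀), |F s - F t| ≤ ε (s - t)
      have hseg : ∀ s ∈ Set.Ioo t t₀, ‖F s - F t‖ ≤ ε * (s - t) := by
        intro s hs
        have h1 : ∀ x ∈ Set.Icc t s, HasDerivWithinAt F (D x) (Set.Icc t s) x := by
          intro x hx
          exact (hF x ⟨lt_of_lt_of_le htpos hx.1, lt_of_le_of_lt hx.2 hs.2⟩).hasDerivWithinAt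
        have h2 : ∀ x ∈ Set.Ico t s, ‖D x‖ ≤ ε := by
          intro x hx
          exact hsub ⟨lt_of_lt_of_le htc hx.1, lt_trans hx.2 hs.2⟩
        exact norm_image_sub_le_of_norm_deriv_le_segment' h1 h2 s
          ⟨le_of_lt hs.1, le_refl s⟩
      have hev : ∀ᶠ s in L, ‖F s - F t‖ ≤ ε * (s - t) := by
        have hIoo : Set.Ioo t t₀ ∈ L := Ioo_mem_nhdsLT_of_mem ⟨ht.2, le_refl t₀⟩
        filter_upwards [hIoo] with s hs using hseg s hs
      have hT1 : Tendsto (fun s => ‖F s - F t‖) L (nhds ‖a₄ * t₀ - F t‖) :=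
        ((hFlim.sub tendsto_const_nhds).norm)
      have hT2 : Tendsto (fun s => ε * (s - t)) L (nhds (ε * (t₀ - t))) := by
        exact (((continuous_id.sub continuous_const).tendsto t₀).mono_left
          nhdsWithin_le_nhds).const_mul ε
      have := le_of_tendsto_of_tendsto hT1 hT2 hev
      rw [← Real.norm_eq_abs, norm_sub_rev]
      exact this
    have hIoo : Set.Ioo c₁ t₀ ∈ L := Ioo_mem_nhdsLT_of_mem ⟨hc₁lt, le_refl t₀⟩
    filter_upwards [hIoo, hmemIoo] with t ht ht'
    have h1 : F t - a₄ * t₀ = β t ^ 2 - a₄ * (t₀ - t) := by simp [hFdef]; ring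
    have h2 : ‖(t₀ - t)‖ = t₀ - t := by
      rw [Real.norm_eq_abs, abs_of_pos (by linarith [ht'.2])]
    rw [Real.norm_eq_abs, ← h1, h2]
    exact hbound t ht
  refine ⟨key, ?_⟩
  -- ratio of squares tends to 1
  have hratio : Tendsto (fun t => β t ^ 2 / (a₄ * (t₀ - t))) L (nhds 1) := by
    have T0 : Tendsto (fun t => (β t ^ 2 - a₄ * (t₀ - t)) / (t₀ - t)) L (nhds 0) :=
      key.tendsto_div_nhds_zero
    have T1 : Tendsto (fun t => (β t ^ 2 - a₄ * (t₀ - t)) / (t₀ - t) / a₄ + 1) L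
        (nhds 1) := by
      have := (T0.div_const a₄).add (tendsto_const_nhds (x := (1:ℝ)))
      simpa using this
    refine T1.congr' ?_
    filter_upwards [hmemIoo] with t ht
    have hd : t₀ - t ≠ 0 := by have := ht.2; intro h; linarith [sub_eq_zero.1 h]
    field_simp
    ring
  have hsq : Tendsto (fun t => Real.sqrt (β t ^ 2 / (a₄ * (t₀ - t)))) L (nhds 1) := by
    have := (Real.continuous_sqrt.tendsto 1).comp hratio
    simpa [Function.comp_def] using this
  refine hsq.congr' ?_
  filter_upwards [hmemIoo] with t ht
  rw [Real.sqrt_div (by positivity), Real.sqrt_sq_eq_abs]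
end

section
/- Under the hypotheses of the previous statement (β' = -a/(2β) - b, β→0⁻, a→a₄>0, b bounded as t↗t₀), the velocity V(t) := a(t)/β(t) satisfies |V(t)| ~ √(a₄/(t₀-t)) as t ↗ t₀; i.e., V blows up with power-law rate p = 1/2. -/
open Real Filter Asymptotics

/-- Under the blow-up hypotheses for `β' = -a/(2β) - b`, the velocity `V = a/β`
blows up with the power-law rate `p = 1/2`: `|V(t)| ~ √(a₄/(t₀-t))` as `t ↗ t₀`. -/
theorem stmt4 (t₀ a₄ : ℝ) (ht₀ : 0 < t₀) (β a b V : ℝ → ℝ)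
    (hβreg : ContDiffOn ℝ 1 β (Set.Ico 0 t₀))
    (hode : ∀ t ∈ Set.Ico (0:ℝ) t₀, deriv β t = -(a t) / (2 * β t) - b t)
    (hβneg : ∀ t ∈ Set.Ico (0:ℝ) t₀, β t < 0)
    (ha : ContinuousOn a (Set.Icc 0 t₀))
    (hb : ContinuousOn b (Set.Icc 0 t₀))
    (ha₄ : a t₀ = a₄) (ha₄pos : 0 < a₄)
    (hbbdd : ∃ M, ∀ t ∈ Set.Icc (0:ℝ) t₀, |b t| ≤ M)
    (hβ0 : Tendsto β (nhdsWithin t₀ (Set.Iio t₀)) (nhds 0))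
    (hVdef : ∀ t ∈ Set.Ico (0:ℝ) t₀, V t = a t / β t) :
    Tendsto (fun t => |V t| / Real.sqrt (a₄ / (t₀ - t)))
      (nhdsWithin t₀ (Set.Iio t₀)) (nhds 1) := by
  obtain ⟨M, hM⟩ := hbbdd
  have ht₀Icc : t₀ ∈ Set.Icc (0:ℝ) t₀ := ⟨ht₀.le, le_rfl⟩
  have hIoo : Set.Ioo 0 t₀ ∈ nhdsWithin t₀ (Set.Iio t₀) := by
    rw [← nhdsWithin_Ioo_eq_nhdsLT ht₀]
    exact self_mem_nhdsWithin
  -- limit of a along 𝓝[<] t₀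
  have haT : Tendsto a (nhdsWithin t₀ (Set.Iio t₀)) (nhds a₄) := by
    have := (ha t₀ ht₀Icc).tendsto
    rw [ha₄] at this
    refine this.comp ?_
    rw [← nhdsWithin_Ioo_eq_nhdsLT ht₀]
    exact tendsto_nhdsWithin_mono_left Set.Ioo_subset_Icc_self tendsto_id
      |>.mono_left (le_of_eq rfl)
  -- 2 β b → 0
  have hbb : Tendsto (fun t => 2 * β t * b t) (nhdsWithin t₀ (Set.Iio t₀)) (nhds 0) := by
    have habs : Tendsto (fun t => 2 * M * |β t|) (nhdsWithin t₀ (Set.Iio t₀)) (nhds 0) := by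
      have : Tendsto (fun t => |β t|) (nhdsWithin t₀ (Set.Iio t₀)) (nhds 0) := by
        simpa using hβ0.abs
      simpa using this.const_mul (2 * M)
    refine squeeze_zero_norm' ?_ habs
    filter_upwards [hIoo] with t ht
    have hbt := hM t (Set.Ioo_subset_Icc_self ht)
    have : ‖2 * β t * b t‖ = 2 * |β t| * |b t| := by
      rw [Real.norm_eq_abs, abs_mul, abs_mul]; norm_num
    rw [this]
    calc 2 * |β t| * |b t| ≤ 2 * |β t| * M :=
          mul_le_mul_of_nonneg_left hbt (by positivity)
      _ = 2 * M * |β t| := by ring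
  have hsum : Tendsto (fun t => a t + 2 * β t * b t) (nhdsWithin t₀ (Set.Iio t₀)) (nhds a₄) := by
    simpa using haT.add hbb
  -- L'Hôpital: β² / (t₀ - t) → a₄
  have hQ : Tendsto (fun t => β t ^ 2 / (t₀ - t)) (nhdsWithin t₀ (Set.Iio t₀)) (nhds a₄) := by
    have hdiff : DifferentiableOn ℝ β (Set.Ico 0 t₀) := hβreg.differentiableOn one_ne_zero
    refine HasDerivAt.lhopital_zero_nhdsLT
      (f' := fun t => 2 * β t * (-(a t) / (2 * β t) - b t)) (g' := fun _ => (-1 : ℝ)) ?_ ?_ ?_ ?_ ?_ ?_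
    · filter_upwards [hIoo] with t ht
      have hmem : Set.Ico (0:ℝ) t₀ ∈ nhds t :=
        mem_nhds_iff.2 ⟨Set.Ioo 0 t₀, Set.Ioo_subset_Ico_self, isOpen_Ioo, ht⟩
      have hd : HasDerivAt β (deriv β t) t :=
        ((hdiff t (Set.Ioo_subset_Ico_self ht)).differentiableAt hmem).hasDerivAt
      rw [hode t (Set.Ioo_subset_Ico_self ht)] at hd
      have := hd.fun_pow 2
      simpa [mul_comm, mul_assoc, mul_left_comm] using this
    · filter_upwards with t
      simpa using ((hasDerivAt_id t).const_sub t₀)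
    · filter_upwards with t; norm_num
    · have : Tendsto (fun t => β t ^ 2) (nhdsWithin t₀ (Set.Iio t₀)) (nhds (0 ^ 2)) :=
        hβ0.pow 2
      simpa using this
    · have : Tendsto (fun t : ℝ => t₀ - t) (nhds t₀) (nhds (t₀ - t₀)) :=
        tendsto_const_nhds.sub tendsto_id
      simpa using this.mono_left nhdsWithin_le_nhds
    · refine hsum.congr' ?_
      filter_upwards [hIoo] with t ht
      have hβt : β t ≠ 0 := (hβneg t (Set.Ioo_subset_Ico_self ht)).ne
      field_simp
      ring
  -- final assembly
  have hden : Tendsto (fun t => Real.sqrt (β t ^ 2 / (t₀ - t) * a₄))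
      (nhdsWithin t₀ (Set.Iio t₀)) (nhds a₄) := by
    have h1 : Tendsto (fun t => β t ^ 2 / (t₀ - t) * a₄)
        (nhdsWithin t₀ (Set.Iio t₀)) (nhds (a₄ * a₄)) := hQ.mul_const a₄
    have := (Real.continuous_sqrt.tendsto (a₄ * a₄)).comp h1
    rwa [Real.sqrt_mul_self ha₄pos.le] at this
  have hnum : Tendsto (fun t => |a t|) (nhdsWithin t₀ (Set.Iio t₀)) (nhds a₄) := by
    have := haT.abs
    rwa [abs_of_pos ha₄pos] at this
  have hlim : Tendsto (fun t => |a t| / Real.sqrt (β t ^ 2 / (t₀ - t) * a₄))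
      (nhdsWithin t₀ (Set.Iio t₀)) (nhds 1) := by
    have := hnum.div hden ha₄pos.ne'
    rwa [div_self ha₄pos.ne'] at this
  refine hlim.congr' ?_
  filter_upwards [hIoo] with t ht
  have htI : t ∈ Set.Ico (0:ℝ) t₀ := Set.Ioo_subset_Ico_self ht
  have hβt : β t < 0 := hβneg t htI
  have hts : (0:ℝ) < t₀ - t := sub_pos.2 ht.2
  have hVeq : |V t| = |a t| / |β t| := by
    rw [hVdef t htI, abs_div]
  have hsq : Real.sqrt (β t ^ 2 / (t₀ - t) * a₄) = |β t| * Real.sqrt (a₄ / (t₀ - t)) := by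
    have : β t ^ 2 / (t₀ - t) * a₄ = β t ^ 2 * (a₄ / (t₀ - t)) := by ring
    rw [this, Real.sqrt_mul (sq_nonneg _), Real.sqrt_sq_eq_abs]
  rw [hsq, hVeq, div_div]
end
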